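/- Let (K, t, c, λ) and (K', t', c', λ') be weak mixed distributive laws in Cat, x : K ⟶ K' a functor, (x, ξ) a monad morphism (K,t) ⟶ (K',t') and (x, ζ) a comonad morphism (K,c) ⟶ (K',c'). Then the two compatibility conditions are equivalent: (i) (c' ◁ x ◁ ε ▷ t) ∘ (c' ◁ x ◁ λ) ∘ (c' ◁ ξ ▷ c) ∘ (λ' ▷ x ▷ c) ∘ (t' ◁ ζ ▷ c) ∘ (t' ◁ x ◁ δ) = (ζ ▷ t) ∘ (x ◁ λ) ∘ (ξ ▷ c); (ii) (c' ◁ x ◁ μ) ∘ (c' ◁ ξ ▷ t) ∘ (λ' ▷ x ▷ t) ∘ (t' ◁ ζ ▷ t) ∘ (t' ◁ x ◁ λ) ∘ (t' ◁ x ◁ η ▷ c) = (ζ ▷ t) ∘ (x ◁ λ) ∘ (ξ ▷ c). -/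
import Mathlib


open CategoryTheory

universe v₁ u₁ v₂ u₂

variable {K : Type u₁} [Category.{v₁} K]

/-- A weak mixed distributive law `λ : tc ⟶ ct` between a monad `t` and a comonad `c`
on a category `K`, satisfying the four axioms of Böhm–Lack–Street, stated componentwise. -/
structure WeakMixedDistLaw (t : CategoryTheory.Monad K) (c : CategoryTheory.Comonad K) where
  l : (c.toFunctor ⋙ t.toFunctor) ⟶ (t.toFunctor ⋙ c.toFunctor)
  mul_compat : ∀ X : K, t.μ.app (c.obj X) ≫ l.app X =
    t.map (l.app X) ≫ l.app (t.obj X) ≫ c.map (t.μ.app X)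
  comul_compat : ∀ X : K, t.map (c.δ.app X) ≫ l.app (c.obj X) ≫ c.map (l.app X) =
    l.app X ≫ c.δ.app (t.obj X)
  weak_unit : ∀ X : K, t.η.app (c.obj X) ≫ l.app X =
    c.δ.app X ≫ c.map (t.η.app (c.obj X)) ≫ c.map (l.app X) ≫ c.map (c.ε.app (t.obj X))
  weak_counit : ∀ X : K, l.app X ≫ c.ε.app (t.obj X) =
    t.map (t.η.app (c.obj X)) ≫ t.map (l.app X) ≫ t.map (c.ε.app (t.obj X)) ≫ t.μ.app X

/-- For a monad morphism (x,ξ) and a comonad morphism (x,ζ) between weak mixed distributive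
laws, the two compatibility conditions (ξ is a 2-cell in Cmd^π, resp. ζ is a 2-cell in Mnd^ι)
are equivalent. -/
theorem wdl_morphism_conditions_equiv
    {K' : Type u₂} [Category.{v₂} K']
    (t : CategoryTheory.Monad K) (c : CategoryTheory.Comonad K)
    (t' : CategoryTheory.Monad K') (c' : CategoryTheory.Comonad K')
    (W : WeakMixedDistLaw t c) (W' : WeakMixedDistLaw t' c')
    (x : K ⥤ K')
    (ξ : (x ⋙ t'.toFunctor) ⟶ (t.toFunctor ⋙ x))
    (hξ_unit : ∀ X : K, t'.η.app (x.obj X) ≫ ξ.app X = x.map (t.η.app X))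
    (hξ_mul : ∀ X : K, t'.μ.app (x.obj X) ≫ ξ.app X =
      t'.map (ξ.app X) ≫ ξ.app (t.obj X) ≫ x.map (t.μ.app X))
    (ζ : (c.toFunctor ⋙ x) ⟶ (x ⋙ c'.toFunctor))
    (hζ_counit : ∀ X : K, ζ.app X ≫ c'.ε.app (x.obj X) = x.map (c.ε.app X))
    (hζ_comul : ∀ X : K, ζ.app X ≫ c'.δ.app (x.obj X) =
      x.map (c.δ.app X) ≫ ζ.app (c.obj X) ≫ c'.map (ζ.app X)) :
    (∀ X : K,
      t'.map (x.map (c.δ.app X)) ≫ t'.map (ζ.app (c.obj X)) ≫ W'.l.app (x.obj (c.obj X)) ≫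
        c'.map (ξ.app (c.obj X)) ≫ c'.map (x.map (W.l.app X)) ≫
        c'.map (x.map (c.ε.app (t.obj X))) =
      ξ.app (c.obj X) ≫ x.map (W.l.app X) ≫ ζ.app (t.obj X)) ↔
    (∀ X : K,
      t'.map (x.map (t.η.app (c.obj X))) ≫ t'.map (x.map (W.l.app X)) ≫
        t'.map (ζ.app (t.obj X)) ≫ W'.l.app (x.obj (t.obj X)) ≫
        c'.map (ξ.app (t.obj X)) ≫ c'.map (x.map (t.μ.app X)) =
      ξ.app (c.obj X) ≫ x.map (W.l.app X) ≫ ζ.app (t.obj X)) := by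
  have zn : ∀ {Y Z : K} (f : Y ⟶ Z),
      x.map (c.map f) ≫ ζ.app Z = ζ.app Y ≫ c'.map (x.map f) := fun f => ζ.naturality f
  have xn : ∀ {Y Z : K} (f : Y ⟶ Z),
      t'.map (x.map f) ≫ ξ.app Z = ξ.app Y ≫ x.map (t.map f) := fun f => ξ.naturality f
  have ln : ∀ {Y Z : K'} (g : Y ⟶ Z),
      t'.map (c'.map g) ≫ W'.l.app Z = W'.l.app Y ≫ c'.map (t'.map g) :=
    fun g => W'.l.naturality g
  have key : ∀ X : K,
      t'.map (x.map (t.η.app (c.obj X))) ≫ t'.map (x.map (W.l.app X)) ≫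
        t'.map (ζ.app (t.obj X)) ≫ W'.l.app (x.obj (t.obj X)) ≫
        c'.map (ξ.app (t.obj X)) ≫ c'.map (x.map (t.μ.app X)) =
      t'.map (x.map (c.δ.app X)) ≫ t'.map (ζ.app (c.obj X)) ≫ W'.l.app (x.obj (c.obj X)) ≫
        c'.map (ξ.app (c.obj X)) ≫ c'.map (x.map (W.l.app X)) ≫
        c'.map (x.map (c.ε.app (t.obj X))) := by
    intro X
    slice_lhs 1 2 => rw [← t'.map_comp, ← x.map_comp, W.weak_unit X]
    simp only [Functor.map_comp, Category.assoc]
    -- now LHS = t'xδ ≫ t'xcη ≫ t'xcl ≫ t'xcε ≫ t'ζ_t ≫ λ' ≫ c'ξ_t ≫ c'xμ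
    slice_lhs 4 5 => rw [← t'.map_comp, zn (Y := c.obj (t.obj X)) (Z := t.obj X) (c.ε.app (t.obj X)), t'.map_comp]
    slice_lhs 3 4 => rw [← t'.map_comp, zn (Y := t.obj (c.obj X)) (Z := c.obj (t.obj X)) (W.l.app X), t'.map_comp]
    slice_lhs 2 3 => rw [← t'.map_comp, zn (Y := c.obj X) (Z := t.obj (c.obj X)) (t.η.app (c.obj X)), t'.map_comp]
    -- LHS = t'xδ ≫ t'ζ_c ≫ t'c'xη ≫ t'c'xl ≫ t'c'xε ≫ λ' ≫ c'ξ_t ≫ c'xμ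
    slice_lhs 5 6 => rw [ln (Y := x.obj (c.obj (t.obj X))) (Z := x.obj (t.obj X)) (x.map (c.ε.app (t.obj X)))]
    slice_lhs 4 5 => rw [ln (Y := x.obj (t.obj (c.obj X))) (Z := x.obj (c.obj (t.obj X))) (x.map (W.l.app X))]
    slice_lhs 3 4 => rw [ln (Y := x.obj (c.obj X)) (Z := x.obj (t.obj (c.obj X))) (x.map (t.η.app (c.obj X)))]
    -- LHS = t'xδ ≫ t'ζ_c ≫ λ' ≫ c't'xη ≫ c't'xl ≫ c't'xε ≫ c'ξ_t ≫ c'xμ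
    slice_lhs 6 7 => rw [← c'.map_comp, xn (Y := c.obj (t.obj X)) (Z := t.obj X) (c.ε.app (t.obj X)), c'.map_comp]
    slice_lhs 5 6 => rw [← c'.map_comp, xn (Y := t.obj (c.obj X)) (Z := c.obj (t.obj X)) (W.l.app X), c'.map_comp]
    slice_lhs 4 5 => rw [← c'.map_comp, xn (Y := c.obj X) (Z := t.obj (c.obj X)) (t.η.app (c.obj X)), c'.map_comp]
    -- LHS = t'xδ ≫ t'ζ_c ≫ λ' ≫ c'ξ_c ≫ c'xtη ≫ c'xtl ≫ c'xtε ≫ c'xμ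
    slice_lhs 5 8 => rw [← c'.map_comp, ← c'.map_comp, ← c'.map_comp, ← x.map_comp,
      ← x.map_comp, ← x.map_comp, ← W.weak_counit X, x.map_comp, c'.map_comp]
  constructor
  · intro h X
    exact (key X).trans (h X)
  · intro h X
    exact (key X).symm.trans (h X)
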